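/- Let p be a prime and let ρ_1, …, ρ_n ∈ ℤ² be primitive vectors, i.e. the two coordinates of each ρ_i have greatest common divisor 1. Let ρ̄_i ∈ (ℤ/pℤ)² denote the reduction of ρ_i modulo p. Then the following two conditions are equivalent. (A) There exist indices m ≠ l such that {ρ̄_m, ρ̄_l} is an 𝔽_p-basis of the 𝔽_p-span of {ρ̄_1, …, ρ̄_n}, and moreover either (b1) there exists an index k with ρ̄_k = a·ρ̄_m + b·ρ̄_l for some a, b ∈ ℤ/pℤ both nonzero, or (b2) there exists an index s ≠ m with ρ̄_s a nonzero scalar multiple of ρ̄_m and an index t ≠ l with ρ̄_t a nonzero scalar multiple of ρ̄_l. (B) There exist c̄_1, …, c̄_n ∈ ℤ/pℤ with c̄_1ρ̄_1 + … + c̄_nρ̄_n = 0 and indices i ≠ j such that c̄_i, c̄_j, and det(ρ̄_i | ρ̄_j) are all nonzero in ℤ/pℤ, where det(ρ̄_i | ρ̄_j) is the determinant of the 2 × 2 matrix over ℤ/pℤ with columns ρ̄_i and ρ̄_j. -/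

import Mathlib

/-- Coordinatewise reduction modulo `p` of a family of vectors in `ℤ²`. -/
def redMod (p : ℕ) {n : ℕ} (ρ : Fin n → (Fin 2 → ℤ)) : Fin n → (Fin 2 → ZMod p) :=
  fun i k => (ρ i k : ZMod p)

section helpers

variable {K : Type*} [Field K]

lemma funext_fin2 {α : Type*} {f g : Fin 2 → α} (h0 : f 0 = g 0) (h1 : f 1 = g 1) :
    f = g := by
  funext i
  fin_cases i
  · exact h0
  · exact h1

lemma indep_iff_det (u w : Fin 2 → K) :
    LinearIndependent K ![u, w] ↔ u 0 * w 1 - u 1 * w 0 ≠ 0 := by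
  rw [LinearIndependent.pair_iff]
  constructor
  · intro h hd
    by_cases hu0 : u 0 = 0
    · by_cases hu1 : u 1 = 0
      · have := (h 1 0 (funext_fin2 (by simp [hu0]) (by simp [hu1]))).1
        exact one_ne_zero this
      · have := (h (-(w 1)) (u 1) ?_).2
        · exact hu1 this
        · refine funext_fin2 ?_ ?_ <;>
            simp only [Pi.add_apply, Pi.smul_apply, smul_eq_mul, Pi.zero_apply]
          · linear_combination -hd
          · ring
    · have := (h (-(w 0)) (u 0) ?_).2
      · exact hu0 this
      · refine funext_fin2 ?_ ?_ <;>
          simp only [Pi.add_apply, Pi.smul_apply, smul_eq_mul, Pi.zero_apply]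
        · ring
        · linear_combination hd
  · intro hd s t hst
    have h0 := congrFun hst 0
    have h1 := congrFun hst 1
    simp only [Pi.add_apply, Pi.smul_apply, smul_eq_mul, Pi.zero_apply] at h0 h1
    have hs : s * (u 0 * w 1 - u 1 * w 0) = 0 := by linear_combination w 1 * h0 - w 0 * h1
    have hs0 : s = 0 := by
      rcases mul_eq_zero.1 hs with h | h
      · exact h
      · exact absurd h hd
    refine ⟨hs0, ?_⟩
    have ht : t * (u 0 * w 1 - u 1 * w 0) = 0 := by linear_combination u 0 * h1 - u 1 * h0
    rcases mul_eq_zero.1 ht with h | h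
    · exact h
    · exact absurd h hd

lemma cramer_pair (u w x : Fin 2 → K) (hD : u 0 * w 1 - u 1 * w 0 ≠ 0) :
    x = ((x 0 * w 1 - x 1 * w 0) * (u 0 * w 1 - u 1 * w 0)⁻¹) • u
      + ((u 0 * x 1 - u 1 * x 0) * (u 0 * w 1 - u 1 * w 0)⁻¹) • w := by
  refine funext_fin2 ?_ ?_
  · simp only [Pi.add_apply, Pi.smul_apply, smul_eq_mul]
    linear_combination (-(x 0)) * mul_inv_cancel₀ hD
  · simp only [Pi.add_apply, Pi.smul_apply, smul_eq_mul]
    linear_combination (-(x 1)) * mul_inv_cancel₀ hD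

end helpers

/-- Equivalence established in the proof of Proposition 4.1: the hypothesis of
Proposition 4.1 (condition (A), on the reductions mod `p` of the primitive rays) is
equivalent to the hypothesis of Lemma 4.2 (condition (B), a mod-`p` relation with two
nonzero coefficients at indices with nonzero mod-`p` determinant). -/
theorem stmt4 (p : ℕ) (hp : p.Prime) (n : ℕ) (ρ : Fin n → (Fin 2 → ℤ))
    (hprim : ∀ i, Int.gcd (ρ i 0) (ρ i 1) = 1) :
    (∃ m l : Fin n, m ≠ l ∧
      LinearIndependent (ZMod p) ![redMod p ρ m, redMod p ρ l] ∧
      Submodule.span (ZMod p) {redMod p ρ m, redMod p ρ l} =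
        Submodule.span (ZMod p) (Set.range (redMod p ρ)) ∧
      ((∃ k : Fin n, ∃ a b : ZMod p, a ≠ 0 ∧ b ≠ 0 ∧
          redMod p ρ k = a • redMod p ρ m + b • redMod p ρ l) ∨
       ((∃ s : Fin n, s ≠ m ∧ ∃ a : ZMod p, a ≠ 0 ∧ redMod p ρ s = a • redMod p ρ m) ∧
        (∃ t : Fin n, t ≠ l ∧ ∃ b : ZMod p, b ≠ 0 ∧ redMod p ρ t = b • redMod p ρ l)))) ↔
    (∃ cbar : Fin n → ZMod p, ∑ i, cbar i • redMod p ρ i = 0 ∧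
      ∃ i j : Fin n, i ≠ j ∧ cbar i ≠ 0 ∧ cbar j ≠ 0 ∧
        redMod p ρ i 0 * redMod p ρ j 1 - redMod p ρ i 1 * redMod p ρ j 0 ≠ 0) := by
  haveI : Fact p.Prime := ⟨hp⟩
  set v : Fin n → (Fin 2 → ZMod p) := redMod p ρ with hv
  constructor
  · rintro ⟨m, l, hml, hind, -, hcase⟩
    have hD : v m 0 * v l 1 - v m 1 * v l 0 ≠ 0 := (indep_iff_det _ _).mp hind
    have hpair := LinearIndependent.pair_iff.mp hind
    rcases hcase with ⟨k, a, b, ha, hb, hk⟩ | ⟨⟨s, hsm, a, ha, hs⟩, ⟨t, htl, b, hb, ht⟩⟩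
    · -- case (b1)
      have hkm : k ≠ m := by
        rintro rfl
        have h0 : (a - 1) • v k + b • v l = 0 := by
          rw [sub_smul, one_smul, sub_add_eq_add_sub, sub_eq_zero]
          exact hk.symm
        exact hb (hpair _ _ h0).2
      have hkl : k ≠ l := by
        rintro rfl
        have h0 : a • v m + (b - 1) • v k = 0 := by
          rw [sub_smul, one_smul, add_sub, sub_eq_zero]
          exact hk.symm
        exact ha (hpair _ _ h0).1
      refine ⟨fun x => (if x = m then a else 0) + (if x = l then b else 0) +
          (if x = k then (-1 : ZMod p) else 0), ?_, m, l, hml, ?_, ?_, hD⟩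
      · have hsum : ∑ x, ((if x = m then a else 0) + (if x = l then b else 0) +
            (if x = k then (-1 : ZMod p) else 0)) • v x
            = a • v m + b • v l + (-1 : ZMod p) • v k := by
          simp only [add_smul, ite_smul, zero_smul, Finset.sum_add_distrib,
            Finset.sum_ite_eq', Finset.mem_univ, if_true]
        rw [hsum, hk, neg_one_smul]
        abel
      · simp only [if_pos rfl, if_neg hml, if_neg (Ne.symm hkm), add_zero, zero_add]
        exact ha
      · simp only [if_pos rfl, if_neg hml.symm, if_neg (Ne.symm hkl), add_zero, zero_add]
        exact hb
    · -- case (b2)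
      have hsl : s ≠ l := by
        rintro rfl
        have h0 : a • v m + (-1 : ZMod p) • v s = 0 := by
          rw [neg_one_smul, add_neg_eq_zero]
          exact hs.symm
        exact ha (hpair _ _ h0).1
      have htm : t ≠ m := by
        rintro rfl
        have h0 : (-1 : ZMod p) • v t + b • v l = 0 := by
          rw [neg_one_smul, neg_add_eq_zero]
          exact ht
        exact (neg_ne_zero.mpr one_ne_zero) (hpair _ _ h0).1
      have hst : s ≠ t := by
        rintro rfl
        have h0 : a • v m + (-b) • v l = 0 := by
          rw [neg_smul, add_neg_eq_zero, ← hs, ← ht]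
        exact ha (hpair _ _ h0).1
      refine ⟨fun x => (if x = m then a else 0) + (if x = l then b else 0) +
          (if x = s then (-1 : ZMod p) else 0) + (if x = t then (-1 : ZMod p) else 0),
          ?_, m, l, hml, ?_, ?_, hD⟩
      · have hsum : ∑ x, ((if x = m then a else 0) + (if x = l then b else 0) +
            (if x = s then (-1 : ZMod p) else 0) + (if x = t then (-1 : ZMod p) else 0)) • v x
            = a • v m + b • v l + (-1 : ZMod p) • v s + (-1 : ZMod p) • v t := by
          simp only [add_smul, ite_smul, zero_smul, Finset.sum_add_distrib,
            Finset.sum_ite_eq', Finset.mem_univ, if_true]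
        rw [hsum, hs, ht, neg_one_smul, neg_one_smul]
        abel
      · simp only [if_pos rfl, if_neg hml, if_neg (Ne.symm hsm), if_neg (Ne.symm htm),
          add_zero, zero_add]
        exact ha
      · simp only [if_pos rfl, if_neg hml.symm, if_neg (Ne.symm hsl), if_neg (Ne.symm htl),
          add_zero, zero_add]
        exact hb
  · rintro ⟨cbar, hsum, i, j, hij, hci, hcj, hD⟩
    have hind : LinearIndependent (ZMod p) ![v i, v j] := (indep_iff_det _ _).mpr hD
    have hpair := LinearIndependent.pair_iff.mp hind
    set A : Fin n → ZMod p := fun k =>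
      (v k 0 * v j 1 - v k 1 * v j 0) * (v i 0 * v j 1 - v i 1 * v j 0)⁻¹ with hA
    set B : Fin n → ZMod p := fun k =>
      (v i 0 * v k 1 - v i 1 * v k 0) * (v i 0 * v j 1 - v i 1 * v j 0)⁻¹ with hB
    have hcr : ∀ k, v k = A k • v i + B k • v j := fun k => cramer_pair (v i) (v j) (v k) hD
    have hAi : A i = 1 := by
      simp only [hA]
      exact mul_inv_cancel₀ hD
    have hBj : B j = 1 := by
      simp only [hB]
      exact mul_inv_cancel₀ hD
    have hAj : A j = 0 := by
      simp only [hA]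
      rw [show v j 0 * v j 1 - v j 1 * v j 0 = 0 by ring, zero_mul]
    have hBi : B i = 0 := by
      simp only [hB]
      rw [show v i 0 * v i 1 - v i 1 * v i 0 = 0 by ring, zero_mul]
    have hexp : ∑ k, cbar k • v k = (∑ k, cbar k * A k) • v i + (∑ k, cbar k * B k) • v j := by
      rw [Finset.sum_smul, Finset.sum_smul, ← Finset.sum_add_distrib]
      exact Finset.sum_congr rfl fun k _ => by rw [hcr k, smul_add, smul_smul, smul_smul]
    have h0 := hpair _ _ (hexp.symm.trans hsum)
    have hEA : ∃ k, k ≠ i ∧ k ≠ j ∧ A k ≠ 0 := by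
      by_contra hcon
      push_neg at hcon
      have hzero : ∀ x ∈ Finset.univ, x ∉ ({i, j} : Finset (Fin n)) → cbar x * A x = 0 := by
        intro x _ hx
        simp only [Finset.mem_insert, Finset.mem_singleton, not_or] at hx
        rw [hcon x hx.1 hx.2, mul_zero]
      have hsub := Finset.sum_subset (Finset.subset_univ ({i, j} : Finset (Fin n))) hzero
      rw [h0.1, Finset.sum_pair hij, hAi, hAj, mul_one, mul_zero, add_zero] at hsub
      exact hci hsub
    have hEB : ∃ k, k ≠ i ∧ k ≠ j ∧ B k ≠ 0 := by
      by_contra hcon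
      push_neg at hcon
      have hzero : ∀ x ∈ Finset.univ, x ∉ ({i, j} : Finset (Fin n)) → cbar x * B x = 0 := by
        intro x _ hx
        simp only [Finset.mem_insert, Finset.mem_singleton, not_or] at hx
        rw [hcon x hx.1 hx.2, mul_zero]
      have hsub := Finset.sum_subset (Finset.subset_univ ({i, j} : Finset (Fin n))) hzero
      rw [h0.2, Finset.sum_pair hij, hBi, hBj, mul_zero, mul_one, zero_add] at hsub
      exact hcj hsub
    obtain ⟨k, hki, hkj, hAk⟩ := hEA
    obtain ⟨k', hk'i, hk'j, hBk'⟩ := hEB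
    refine ⟨i, j, hij, hind, ?_, ?_⟩
    · apply le_antisymm
      · rw [Submodule.span_le]
        intro x hx
        simp only [Set.mem_insert_iff, Set.mem_singleton_iff] at hx
        rcases hx with rfl | rfl
        · exact Submodule.subset_span ⟨i, rfl⟩
        · exact Submodule.subset_span ⟨j, rfl⟩
      · rw [Submodule.span_le]
        rintro x ⟨k₀, rfl⟩
        exact Submodule.mem_span_pair.mpr ⟨A k₀, B k₀, (hcr k₀).symm⟩
    · by_cases hBk : B k = 0
      · by_cases hAk' : A k' = 0
        · refine Or.inr ⟨⟨k, hki, A k, hAk, ?_⟩, ⟨k', hk'j, B k', hBk', ?_⟩⟩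
          · rw [hcr k, hBk, zero_smul, add_zero]
          · rw [hcr k', hAk', zero_smul, zero_add]
        · exact Or.inl ⟨k', A k', B k', hAk', hBk', hcr k'⟩
      · exact Or.inl ⟨k, A k, B k, hAk, hBk, hcr k⟩
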